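/- (Identifiability for dense β*.) Under Assumption 1, the solution set S := {β ∈ ℝ^d : Cov(I,Y) = Cov(Ĩ,X̃)β} equals the singleton {β*} if and only if rank(Cov(I,X)) = d. In particular, a necessary condition for identifiability is m ≥ d. -/

import Mathlib

open MeasureTheory ProbabilityTheory Filter Matrix
open scoped Topology NNReal ENNReal

noncomputable section


lemma mul_integrable {Ω : Type*} [MeasurableSpace Ω] {μ : Measure Ω} {f g : Ω → ℝ}
    (hf : MemLp f 2 μ) (hg : MemLp g 2 μ) : Integrable (fun ω => f ω * g ω) μ := by
  have : MemLp (f • g) 1 μ := hg.smul hf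
  exact memLp_one_iff_integrable.mp this

lemma rank_iff_set {m d : ℕ} (A : Matrix (Fin m) (Fin d) ℝ) (b : Fin d → ℝ) :
    ({β : Fin d → ℝ | A *ᵥ b = A *ᵥ β} = {b}) ↔ A.rank = d := by
  have hfin : Module.finrank ℝ (Fin d → ℝ) = d := by simp
  have hrn := LinearMap.finrank_range_add_finrank_ker A.mulVecLin
  rw [hfin] at hrn
  have hker : A.rank = d ↔ LinearMap.ker A.mulVecLin = ⊥ := by
    rw [Matrix.rank]
    constructor
    · intro h
      rw [h] at hrn
      have : Module.finrank ℝ (LinearMap.ker A.mulVecLin) = 0 := by omega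
      exact Submodule.finrank_eq_zero.mp this
    · intro h
      rw [h] at hrn
      simpa using hrn
  rw [hker]
  constructor
  · intro hS
    rw [LinearMap.ker_eq_bot']
    intro v hv
    have hb : b + v ∈ {β : Fin d → ℝ | A *ᵥ b = A *ᵥ β} := by
      simp only [Set.mem_setOf_eq, Matrix.mulVec_add]
      rw [show A *ᵥ v = 0 from hv]
      simp
    rw [hS] at hb
    have : b + v = b := hb
    exact add_left_cancel (this.trans (add_zero b).symm)
  · intro hk
    have hinj : Function.Injective A.mulVecLin := LinearMap.ker_eq_bot.mp hk
    ext β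
    simp only [Set.mem_setOf_eq, Set.mem_singleton_iff]
    constructor
    · intro h
      exact (hinj (show A.mulVecLin β = A.mulVecLin b by simpa [Matrix.mulVecLin_apply] using h.symm))
    · rintro rfl; rfl


/-- Cross-covariance matrix of two centered random vectors (equal to `E[U Vᵀ]`
for centered `U, V`). -/
def covMat {Ω : Type*} [MeasurableSpace Ω] (μ : Measure Ω) {ι κ : Type*}
    [Fintype ι] [Fintype κ] (U : Ω → ι → ℝ) (V : Ω → κ → ℝ) : Matrix ι κ ℝ :=
  Matrix.of fun i j => ∫ ω, U ω i * V ω j ∂μ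

/-- Cross-covariance vector of a centered random vector and a centered
random variable. -/
def covVec {Ω : Type*} [MeasurableSpace Ω] (μ : Measure Ω) {ι : Type*}
    [Fintype ι] (U : Ω → ι → ℝ) (Y : Ω → ℝ) : ι → ℝ :=
  fun i => ∫ ω, U ω i * Y ω ∂μ

/-- Variance (covariance) matrix of a random vector. -/
def varMat {Ω : Type*} [MeasurableSpace Ω] (μ : Measure Ω) {ι : Type*} [Fintype ι]
    (Z : Ω → ι → ℝ) : Matrix ι ι ℝ :=
  Matrix.of fun i j =>
    ∫ ω, Z ω i * Z ω j ∂μ - (∫ ω, Z ω i ∂μ) * (∫ ω, Z ω j ∂μ)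

/-- Euclidean (ℓ2) norm of a finite-dimensional real vector. -/
def norm2 {ι : Type*} [Fintype ι] (v : ι → ℝ) : ℝ := Real.sqrt (∑ i, v i ^ 2)

/-- ℓ0 "norm": number of nonzero entries. -/
def sparsity {ι : Type*} [Fintype ι] (v : ι → ℝ) : ℕ :=
  (Finset.univ.filter fun i => v i ≠ 0).card

/-- ℓ2 → ℓ2 operator norm of a real matrix. -/
def opNorm {ι κ : Type*} [Fintype ι] [Fintype κ] (A : Matrix ι κ ℝ) : ℝ :=
  sSup {y : ℝ | ∃ x : κ → ℝ, norm2 x ≤ 1 ∧ y = norm2 (A *ᵥ x)}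

/-- Identifiability for dense `β*`: under Assumption 1, the solution
set `S = {β : Cov(I,Y) = Cov(Ĩ,X̃) β}` equals `{β*}` iff `rank(Cov(I,X)) = d`;
in particular `m ≥ d` is necessary for identifiability. -/
theorem stmt_1
    (m d : ℕ) (βstar : Fin d → ℝ)
    (Ω : Type*) [MeasurableSpace Ω] (μ : Measure Ω) [IsProbabilityMeasure μ]
    (I : Ω → Fin m → ℝ) (X : Ω → Fin d → ℝ) (Y ε : Ω → ℝ)
    (It : Ω → Fin m → ℝ) (Xt : Ω → Fin d → ℝ)
    -- measurability and finite second moments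
    (hImeas : Measurable I)
    (hI2 : ∀ i, MemLp (fun ω => I ω i) 2 μ)
    (hX2 : ∀ j, MemLp (fun ω => X ω j) 2 μ)
    (hIt2 : ∀ i, MemLp (fun ω => It ω i) 2 μ)
    (hXt2 : ∀ j, MemLp (fun ω => Xt ω j) 2 μ)
    (hY2 : MemLp Y 2 μ) (hε2 : MemLp ε 2 μ)
    -- all variables are centered
    (hIc : ∀ i, ∫ ω, I ω i ∂μ = 0)
    (hXc : ∀ j, ∫ ω, X ω j ∂μ = 0)
    (hItc : ∀ i, ∫ ω, It ω i ∂μ = 0)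
    (hXtc : ∀ j, ∫ ω, Xt ω j ∂μ = 0)
    (hYc : ∫ ω, Y ω ∂μ = 0)
    -- structural model Y = Xᵀβ* + ε
    (hmodel : ∀ ω, Y ω = (∑ j, X ω j * βstar j) + ε ω)
    -- Assumption 1 (i): Cov(Ĩ,X̃) = Cov(I,X)
    (hcov : covMat μ It Xt = covMat μ I X)
    -- Assumption 1 (ii): E[ε | I] = 0
    (hexo : μ[ε | MeasurableSpace.comap I inferInstance] =ᵐ[μ] 0) :
    ({β : Fin d → ℝ | covVec μ I Y = covMat μ It Xt *ᵥ β} = {βstar}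
        ↔ (covMat μ I X).rank = d)
    ∧ ({β : Fin d → ℝ | covVec μ I Y = covMat μ It Xt *ᵥ β} = {βstar} → d ≤ m) := by
  classical
  have hm : MeasurableSpace.comap I MeasurableSpace.pi ≤ _ := measurable_iff_comap_le.mp hImeas
  haveI : SigmaFinite (μ.trim hm) := inferInstance
  have hIε : ∀ i, ∫ ω, I ω i * ε ω ∂μ = 0 := by
    intro i
    have hIm' : Measurable[MeasurableSpace.comap I MeasurableSpace.pi] I :=
      Measurable.of_comap_le le_rfl
    have hsm : StronglyMeasurable[MeasurableSpace.comap I MeasurableSpace.pi]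
        (fun ω => I ω i) := ((measurable_pi_apply i).comp hIm').stronglyMeasurable
    have hint : Integrable (fun ω => I ω i * ε ω) μ := mul_integrable (hI2 i) hε2
    have hεint : Integrable ε μ := hε2.integrable one_le_two
    have hpull :=
      condExp_mul_of_stronglyMeasurable_left (μ := μ) hsm
        (show Integrable ((fun ω => I ω i) * ε) μ from hint) hεint
    have h0 : μ[(fun ω => I ω i) * ε | MeasurableSpace.comap I MeasurableSpace.pi] =ᵐ[μ] 0 := by
      refine hpull.trans ?_
      filter_upwards [hexo] with ω hω
      simp only [Pi.mul_apply, Pi.zero_apply] at hω ⊢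
      rw [hω, mul_zero]
    calc ∫ ω, I ω i * ε ω ∂μ
        = ∫ ω, (μ[(fun ω => I ω i) * ε | MeasurableSpace.comap I MeasurableSpace.pi]) ω ∂μ :=
          (integral_condExp (f := (fun ω => I ω i) * ε) hm).symm
      _ = ∫ _ω, (0:ℝ) ∂μ := integral_congr_ae h0
      _ = 0 := by simp
  have hkey : covVec μ I Y = covMat μ I X *ᵥ βstar := by
    funext i
    have hXint : ∀ j, Integrable (fun ω => I ω i * X ω j * βstar j) μ :=
      fun j => (mul_integrable (hI2 i) (hX2 j)).mul_const (βstar j)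
    have hεint : Integrable (fun ω => I ω i * ε ω) μ := mul_integrable (hI2 i) hε2
    show ∫ ω, I ω i * Y ω ∂μ = _
    calc ∫ ω, I ω i * Y ω ∂μ
        = ∫ ω, (∑ j, I ω i * X ω j * βstar j) + I ω i * ε ω ∂μ := by
          refine integral_congr_ae (Filter.Eventually.of_forall fun ω => ?_)
          show I ω i * Y ω = ∑ j, I ω i * X ω j * βstar j + I ω i * ε ω
          rw [hmodel ω, mul_add, Finset.mul_sum]
          simp [mul_assoc]
      _ = (∑ j, ∫ ω, I ω i * X ω j * βstar j ∂μ) + ∫ ω, I ω i * ε ω ∂μ := by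
          rw [integral_add (integrable_finset_sum _ fun j _ => hXint j) hεint,
            integral_finset_sum _ fun j _ => hXint j]
      _ = ∑ j, (∫ ω, I ω i * X ω j ∂μ) * βstar j := by
          simp [integral_mul_const, hIε i]
      _ = (covMat μ I X *ᵥ βstar) i := by
          simp [covMat, Matrix.mulVec, dotProduct]
  rw [hcov, hkey]
  refine ⟨rank_iff_set _ _, fun h => ?_⟩
  rw [rank_iff_set] at h
  calc d = (covMat μ I X).rank := h.symm
    _ ≤ m := by simpa using (covMat μ I X).rank_le_card_height
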